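/- Division test for factors: let R be a finite nonempty relation over U and P a relation over a nonempty V ⊊ U. Then P is a factor of R if and only if π_V(R) = P and |P| · |π_{U\V}(R)| = |R|. -/
import Mathlib

open Classical

noncomputable def restrictT {α D : Type*} (V : Set α) (t : α → Option D) : α → Option D :=
  fun a => if a ∈ V then t a else none

def combineT {α D : Type*} (q r : α → Option D) : α → Option D :=
  fun a => (q a).orElse (fun _ => r a)

def prodRel {α D : Type*} (Q R : Set (α → Option D)) : Set (α → Option D) :=
  Set.image2 combineT Q R

def IsOver {α D : Type*} (U : Set α) (t : α → Option D) : Prop :=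
  ∀ a, (t a).isSome ↔ a ∈ U

def IsRelOver {α D : Type*} (U : Set α) (R : Set (α → Option D)) : Prop :=
  R.Finite ∧ ∀ t ∈ R, IsOver U t

noncomputable def projRel {α D : Type*} (V : Set α) (R : Set (α → Option D)) :
    Set (α → Option D) :=
  (restrictT V) '' R

def IsFactor {α D : Type*} (U : Set α) (R : Set (α → Option D))
    (V : Set α) (Q : Set (α → Option D)) : Prop :=
  V.Nonempty ∧ V ⊆ U ∧ IsRelOver V Q ∧
    ∃ R', IsRelOver (U \ V) R' ∧ R = prodRel Q R'

noncomputable def prodList {α D : Type*} (L : List (Set (α → Option D))) :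
    Set (α → Option D) :=
  L.foldr prodRel {fun _ => none}

def IsPrimeRel {α D : Type*} (U : Set α) (Q : Set (α → Option D)) : Prop :=
  IsRelOver U Q ∧ ∀ V P, IsFactor U Q V P → P = Q

def selEq {α D : Type*} (A : α) (v : D) (S : Set (α → Option D)) : Set (α → Option D) :=
  {t ∈ S | t A = some v}

def selNe {α D : Type*} (A : α) (v : D) (S : Set (α → Option D)) : Set (α → Option D) :=
  {t ∈ S | t A ≠ some v}

-- auxiliary lemmas

lemma over_none {α D : Type*} {V : Set α} {t : α → Option D} (h : IsOver V t)
    {a : α} (ha : a ∉ V) : t a = none :=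
  Option.not_isSome_iff_eq_none.mp (fun hs => ha ((h a).mp hs))

lemma restrict_combine_left {α D : Type*} {V : Set α} {q r : α → Option D}
    (hq : IsOver V q) : restrictT V (combineT q r) = q := by
  funext a
  simp only [restrictT, combineT]
  by_cases ha : a ∈ V
  · simp only [ha, if_true]
    obtain ⟨v, hv⟩ := Option.isSome_iff_exists.mp ((hq a).mpr ha)
    rw [hv]; rfl
  · simp [ha, over_none hq ha]

lemma restrict_combine_right {α D : Type*} {V W : Set α} {q r : α → Option D}
    (hdisj : Disjoint V W) (hq : IsOver V q) (hr : IsOver W r) :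
    restrictT W (combineT q r) = r := by
  funext a
  simp only [restrictT, combineT]
  by_cases ha : a ∈ W
  · have haV : a ∉ V := fun h => (Set.disjoint_left.mp hdisj h) ha
    simp [ha, over_none hq haV, Option.orElse]
  · simp [ha, (over_none hr ha).symm]

lemma restrict_over {α D : Type*} {U W : Set α} {t : α → Option D}
    (h : IsOver U t) (hWU : W ⊆ U) : IsOver W (restrictT W t) := by
  intro a
  simp only [restrictT]
  by_cases ha : a ∈ W
  · simp [ha, (h a).mpr (hWU ha)]
  · simp [ha]

lemma combine_restrict_self {α D : Type*} {U V : Set α} {t : α → Option D}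
    (h : IsOver U t) (hVU : V ⊆ U) :
    combineT (restrictT V t) (restrictT (U \ V) t) = t := by
  funext a
  simp only [combineT, restrictT]
  by_cases ha : a ∈ V
  · simp only [ha, if_true]
    obtain ⟨v, hv⟩ := Option.isSome_iff_exists.mp ((h a).mpr (hVU ha))
    rw [hv]; rfl
  · simp only [ha, if_false]
    by_cases haU : a ∈ U
    · simp [Set.mem_diff, haU, ha, Option.orElse]
    · simp [Set.mem_diff, haU, over_none h haU, Option.orElse]

lemma ncard_prod' {A B : Type*} (s : Set A) (t : Set B) :
    (s ×ˢ t).ncard = s.ncard * t.ncard := by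
  rw [← Nat.card_coe_set_eq, ← Nat.card_coe_set_eq, ← Nat.card_coe_set_eq,
    Nat.card_congr (Equiv.Set.prod s t), Nat.card_prod]

lemma prodRel_injOn {α D : Type*} {V W : Set α} {Q S : Set (α → Option D)}
    (hdisj : Disjoint V W) (hQ : ∀ q ∈ Q, IsOver V q) (hS : ∀ r ∈ S, IsOver W r) :
    Set.InjOn (fun p : (α → Option D) × (α → Option D) => combineT p.1 p.2) (Q ×ˢ S) := by
  rintro ⟨q, r⟩ ⟨hq, hr⟩ ⟨q', r'⟩ ⟨hq', hr'⟩ h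
  simp only at h
  have h1 : q = q' := by
    rw [← restrict_combine_left (r := r) (hQ q hq), h,
      restrict_combine_left (hQ q' hq')]
  have h2 : r = r' := by
    rw [← restrict_combine_right hdisj (hQ q hq) (hS r hr), h,
      restrict_combine_right hdisj (hQ q' hq') (hS r' hr')]
  simp [h1, h2]

lemma prodRel_ncard {α D : Type*} {V W : Set α} {Q S : Set (α → Option D)}
    (hdisj : Disjoint V W) (hQ : ∀ q ∈ Q, IsOver V q) (hS : ∀ r ∈ S, IsOver W r) :
    (prodRel Q S).ncard = Q.ncard * S.ncard := by
  rw [prodRel, ← Set.image_prod, Set.ncard_image_of_injOn (prodRel_injOn hdisj hQ hS),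
    ncard_prod']

theorem stmt_8 {α D : Type*} (U V : Set α) (hUfin : U.Finite)
    (hVU : V ⊆ U) (hVne : V.Nonempty) (hVproper : V ≠ U)
    (R P : Set (α → Option D)) (hR : IsRelOver U R) (hRne : R.Nonempty)
    (hP : IsRelOver V P) :
    IsFactor U R V P ↔
      (projRel V R = P ∧ P.ncard * (projRel (U \ V) R).ncard = R.ncard) := by
  have hdisj : Disjoint V (U \ V) := Set.disjoint_sdiff_right
  constructor
  · rintro ⟨-, -, -, R', ⟨hR'fin, hR'over⟩, rfl⟩
    have hPne : P.Nonempty := hRne.of_image2_left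
    have hR'ne : R'.Nonempty := hRne.of_image2_right
    have hprojV : projRel V (prodRel P R') = P := by
      apply Set.Subset.antisymm
      · rintro _ ⟨t, ht, rfl⟩
        obtain ⟨q, hq, r, hr, rfl⟩ := ht
        rw [restrict_combine_left (hP.2 q hq)]
        exact hq
      · intro q hq
        obtain ⟨r, hr⟩ := hR'ne
        exact ⟨combineT q r, Set.mem_image2_of_mem hq hr,
          restrict_combine_left (hP.2 q hq)⟩
    have hprojW : projRel (U \ V) (prodRel P R') = R' := by
      apply Set.Subset.antisymm
      · rintro _ ⟨t, ht, rfl⟩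
        obtain ⟨q, hq, r, hr, rfl⟩ := ht
        rw [restrict_combine_right hdisj (hP.2 q hq) (hR'over r hr)]
        exact hr
      · intro r hr
        obtain ⟨q, hq⟩ := hPne
        exact ⟨combineT q r, Set.mem_image2_of_mem hq hr,
          restrict_combine_right hdisj (hP.2 q hq) (hR'over r hr)⟩
    refine ⟨hprojV, ?_⟩
    rw [hprojW, prodRel_ncard hdisj hP.2 hR'over]
  · rintro ⟨hproj, hcard⟩
    have hR'over : ∀ r ∈ projRel (U \ V) R, IsOver (U \ V) r := by
      rintro _ ⟨t, ht, rfl⟩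
      exact restrict_over (hR.2 t ht) Set.diff_subset
    have hR'fin : (projRel (U \ V) R).Finite := hR.1.image _
    refine ⟨hVne, hVU, hP, projRel (U \ V) R, ⟨hR'fin, hR'over⟩, ?_⟩
    have hsub : R ⊆ prodRel P (projRel (U \ V) R) := by
      intro t ht
      have h1 : restrictT V t ∈ P := hproj ▸ Set.mem_image_of_mem _ ht
      have h2 : restrictT (U \ V) t ∈ projRel (U \ V) R := Set.mem_image_of_mem _ ht
      have := combine_restrict_self (hR.2 t ht) hVU
      exact this ▸ Set.mem_image2_of_mem h1 h2
    have hfin : (prodRel P (projRel (U \ V) R)).Finite := hP.1.image2 _ hR'fin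
    have hcard2 : (prodRel P (projRel (U \ V) R)).ncard
        = P.ncard * (projRel (U \ V) R).ncard := prodRel_ncard hdisj hP.2 hR'over
    exact Set.eq_of_subset_of_ncard_le hsub (by rw [hcard2, hcard]) hfin
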